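/- arXiv:math/0303114 — 3 statements merged into one kernel-verified Lean document; each statement's English description precedes it below -/
import Mathlib

section
/- Quantitative implicit function theorem: Let B1, B2 be Banach spaces and F : B1 × ℝ → B2 have continuous Fréchet derivative, with D_h F(0,0) invertible and ‖(D_h F(0,0))⁻¹‖ ≤ C. Suppose there exist r0 > r > 0 and t0 > 0 such that for all (h, t) in the closed ball U(r0) × [0, t0] one has ‖D_h F(h,t) − D_h F(0,0)‖ ≤ 1/(2C) and ‖F(0,t)‖ ≤ r/(2C). Then there exists a C¹ path h(t) in U(r) for t ∈ [0, t0] with F(h(t), t) = 0, and for each t this h(t) is the unique solution of F(h, t) = 0 in U(r0). -/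
open Set Metric

/-- **Quantitative implicit function theorem.** -/
theorem quantitative_implicit_function_theorem
    {B1 B2 : Type*} [NormedAddCommGroup B1] [NormedSpace ℝ B1] [CompleteSpace B1]
    [NormedAddCommGroup B2] [NormedSpace ℝ B2] [CompleteSpace B2]
    (F : B1 × ℝ → B2) (hF : ContDiff ℝ 1 F)
    (e : B1 ≃L[ℝ] B2)
    (he : (e : B1 →L[ℝ] B2) = fderiv ℝ (fun h => F (h, 0)) 0)
    (C : ℝ) (hC : 0 < C) (hinv : ‖(e.symm : B2 →L[ℝ] B1)‖ ≤ C)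
    (r r0 t0 : ℝ) (hr : 0 < r) (hrr0 : r < r0) (ht0 : 0 < t0)
    (hderiv : ∀ h ∈ closedBall (0 : B1) r0, ∀ t ∈ Icc (0 : ℝ) t0,
      ‖fderiv ℝ (fun h' => F (h', t)) h - (e : B1 →L[ℝ] B2)‖ ≤ 1 / (2 * C))
    (hsmall : ∀ t ∈ Icc (0 : ℝ) t0, ‖F (0, t)‖ ≤ r / (2 * C)) :
    ∃ h : ℝ → B1, ContDiffOn ℝ 1 h (Icc 0 t0) ∧
      (∀ t ∈ Icc (0 : ℝ) t0, h t ∈ closedBall (0 : B1) r ∧ F (h t, t) = 0) ∧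
      (∀ t ∈ Icc (0 : ℝ) t0, ∀ h' ∈ closedBall (0 : B1) r0, F (h', t) = 0 → h' = h t) := by
  have hF1 : Differentiable ℝ F := hF.differentiable one_ne_zero
  have hsub : closedBall (0 : B1) r ⊆ closedBall (0 : B1) r0 :=
    closedBall_subset_closedBall hrr0.le
  -- partial derivative in the first variable
  have hD : ∀ (x : B1) (t : ℝ), HasFDerivAt (fun h' => F (h', t))
      ((fderiv ℝ F (x, t)).comp (ContinuousLinearMap.inl ℝ B1 ℝ)) x := by
    intro x t
    exact ((hF1 (x, t)).hasFDerivAt).comp x (hasFDerivAt_prodMk_left x t)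
  -- norm bound on `id - e.symm ∘ D`
  have hcomp_bound : ∀ (x : B1), x ∈ closedBall (0 : B1) r0 → ∀ t ∈ Icc (0 : ℝ) t0,
      ‖ContinuousLinearMap.id ℝ B1 -
        (e.symm : B2 →L[ℝ] B1).comp (fderiv ℝ (fun h' => F (h', t)) x)‖ ≤ 1 / 2 := by
    intro x hx t ht
    have heq : ContinuousLinearMap.id ℝ B1 -
        (e.symm : B2 →L[ℝ] B1).comp (fderiv ℝ (fun h' => F (h', t)) x) =
        (e.symm : B2 →L[ℝ] B1).comp ((e : B1 →L[ℝ] B2) - fderiv ℝ (fun h' => F (h', t)) x) := by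
      ext v; simp
    rw [heq]
    calc ‖(e.symm : B2 →L[ℝ] B1).comp ((e : B1 →L[ℝ] B2) - fderiv ℝ (fun h' => F (h', t)) x)‖
        ≤ ‖(e.symm : B2 →L[ℝ] B1)‖ * ‖(e : B1 →L[ℝ] B2) - fderiv ℝ (fun h' => F (h', t)) x‖ :=
          ContinuousLinearMap.opNorm_comp_le _ _
      _ ≤ C * (1 / (2 * C)) := by
          apply mul_le_mul hinv ?_ (norm_nonneg _) hC.le
          rw [norm_sub_rev]
          exact hderiv x hx t ht
      _ = 1 / 2 := by field_simp
  -- half-Lipschitz estimate for `Φ t x = x - e.symm (F (x, t))` on the ball of radius r0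
  have hlip : ∀ t ∈ Icc (0 : ℝ) t0, ∀ x ∈ closedBall (0 : B1) r0, ∀ y ∈ closedBall (0 : B1) r0,
      ‖(x - e.symm (F (x, t))) - (y - e.symm (F (y, t)))‖ ≤ (1 / 2) * ‖x - y‖ := by
    intro t ht x hx y hy
    have hconv : Convex ℝ (closedBall (0 : B1) r0) := convex_closedBall _ _
    have key : ∀ z ∈ closedBall (0 : B1) r0,
        HasFDerivWithinAt (fun h' => h' - e.symm (F (h', t)))
          (ContinuousLinearMap.id ℝ B1 -
            (e.symm : B2 →L[ℝ] B1).comp (fderiv ℝ (fun h' => F (h', t)) z))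
          (closedBall (0 : B1) r0) z := by
      intro z hz
      have hz1 : HasFDerivAt (fun h' => F (h', t)) (fderiv ℝ (fun h' => F (h', t)) z) z := by
        rw [(hD z t).fderiv]; exact hD z t
      have hz2 : HasFDerivAt (fun h' : B1 => e.symm (F (h', t)))
          ((e.symm : B2 →L[ℝ] B1).comp (fderiv ℝ (fun h' => F (h', t)) z)) z :=
        ((e.symm : B2 →L[ℝ] B1).hasFDerivAt).comp z hz1
      exact ((hasFDerivAt_id z).sub hz2).hasFDerivWithinAt
    exact hconv.norm_image_sub_le_of_norm_hasFDerivWithin_le key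
      (fun z hz => hcomp_bound z hz t ht) hy hx
  -- the map sends the ball of radius r into itself
  have hmaps : ∀ t ∈ Icc (0 : ℝ) t0, ∀ x ∈ closedBall (0 : B1) r,
      (x - e.symm (F (x, t))) ∈ closedBall (0 : B1) r := by
    intro t ht x hx
    have h0 : (0 : B1) ∈ closedBall (0 : B1) r0 := mem_closedBall_self (hr.trans hrr0).le
    have h1 := hlip t ht x (hsub hx) 0 h0
    have h2 : ‖e.symm (F (0, t))‖ ≤ r / 2 := by
      calc ‖e.symm (F (0, t))‖ ≤ ‖(e.symm : B2 →L[ℝ] B1)‖ * ‖F (0, t)‖ :=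
            (e.symm : B2 →L[ℝ] B1).le_opNorm _
        _ ≤ C * (r / (2 * C)) := mul_le_mul hinv (hsmall t ht) (norm_nonneg _) hC.le
        _ = r / 2 := by field_simp
    rw [mem_closedBall_zero_iff]
    have hx' : ‖x‖ ≤ r := mem_closedBall_zero_iff.mp hx
    have key := hlip t ht x (hsub hx) 0 h0
    rw [sub_zero] at key
    have hstep : ‖x - e.symm (F (x, t))‖ ≤
        ‖(x - e.symm (F (x, t))) - ((0 : B1) - e.symm (F (0, t)))‖ +
          ‖(0 : B1) - e.symm (F (0, t))‖ := by
      have hab : (x - e.symm (F (x, t))) - ((0 : B1) - e.symm (F (0, t))) +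
          ((0 : B1) - e.symm (F (0, t))) = x - e.symm (F (x, t)) := by abel
      have hn := norm_add_le ((x - e.symm (F (x, t))) - ((0 : B1) - e.symm (F (0, t))))
        ((0 : B1) - e.symm (F (0, t)))
      rwa [hab] at hn
    have h0n : ‖(0 : B1) - e.symm (F (0, t))‖ = ‖e.symm (F (0, t))‖ := by simp
    rw [h0n] at hstep
    linarith
  -- existence and uniqueness of the solution for each t
  have exu : ∀ t : ℝ, ∃ x : B1, t ∈ Icc (0 : ℝ) t0 →
      x ∈ closedBall (0 : B1) r ∧ F (x, t) = 0 ∧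
        ∀ y ∈ closedBall (0 : B1) r0, F (y, t) = 0 → y = x := by
    intro t
    by_cases ht : t ∈ Icc (0 : ℝ) t0
    swap
    · exact ⟨0, fun h => absurd h ht⟩
    haveI : CompleteSpace (closedBall (0 : B1) r) :=
      isClosed_closedBall.completeSpace_coe
    haveI : Nonempty (closedBall (0 : B1) r) := ⟨⟨0, mem_closedBall_self hr.le⟩⟩
    set f : closedBall (0 : B1) r → closedBall (0 : B1) r :=
      fun x => ⟨x.1 - e.symm (F (x.1, t)), hmaps t ht x.1 x.2⟩ with hf_def
    have hcontr : ContractingWith (1 / 2 : NNReal) f := by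
      constructor
      · exact_mod_cast (by norm_num : (1 / 2 : ℝ) < 1)
      · apply LipschitzWith.of_dist_le_mul
        intro x y
        rw [Subtype.dist_eq, Subtype.dist_eq, dist_eq_norm, dist_eq_norm]
        have := hlip t ht x.1 (hsub x.2) y.1 (hsub y.2)
        simpa using this
    set x := hcontr.fixedPoint f
    have hxfix : f x = x := hcontr.fixedPoint_isFixedPt
    have hxval : x.1 - e.symm (F (x.1, t)) = x.1 := congrArg Subtype.val hxfix
    have hFx : F (x.1, t) = 0 := by
      have h1 : e.symm (F (x.1, t)) = 0 := by
        have := sub_eq_self.mp hxval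
        exact this
      exact (ContinuousLinearEquiv.map_eq_zero_iff e.symm).mp h1
    refine ⟨x.1, fun _ => ⟨x.2, hFx, ?_⟩⟩
    intro y hy hFy
    have h1 := hlip t ht y hy x.1 (hsub x.2)
    rw [hFy, hFx] at h1
    simp only [map_zero, sub_zero] at h1
    have : ‖y - x.1‖ ≤ (1 / 2) * ‖y - x.1‖ := h1
    have h2 : ‖y - x.1‖ ≤ 0 := by linarith
    have := le_antisymm h2 (norm_nonneg _)
    rwa [norm_eq_zero, sub_eq_zero] at this
  choose h hh using exu
  refine ⟨h, ?_, fun t ht => ⟨(hh t ht).1, (hh t ht).2.1⟩,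
    fun t ht y hy hFy => (hh t ht).2.2 y hy hFy⟩
  -- smoothness
  intro s hs
  obtain ⟨hhs_ball, hhs_zero, _⟩ := hh s hs
  set p : B1 × ℝ := (h s, s) with hp_def
  set A : B1 →L[ℝ] B2 := (fderiv ℝ F p).comp (ContinuousLinearMap.inl ℝ B1 ℝ) with hA_def
  have hA : fderiv ℝ (fun h' => F (h', s)) (h s) = A := (hD (h s) s).fderiv
  -- A is invertible
  set u : B1 →L[ℝ] B1 := ContinuousLinearMap.id ℝ B1 - (e.symm : B2 →L[ℝ] B1).comp A
    with hu_def
  have hu : ‖u‖ < 1 := by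
    have := hcomp_bound (h s) (hsub hhs_ball) s hs
    rw [hA] at this
    calc ‖u‖ ≤ 1 / 2 := this
      _ < 1 := by norm_num
  set w : (B1 →L[ℝ] B1)ˣ := Units.oneSub u hu with hw_def
  set A' : B1 ≃L[ℝ] B1 := ContinuousLinearEquiv.unitsEquiv ℝ B1 w with hA'_def
  have hA' : ∀ v : B1, A' v = e.symm (A v) := by
    intro v
    show (w : B1 →L[ℝ] B1) v = _
    rw [hw_def, Units.val_oneSub, hu_def]
    simp
  set Aeq : B1 ≃L[ℝ] B2 := A'.trans e with hAeq_def
  have hAeq : ∀ v : B1, Aeq v = A v := by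
    intro v
    show e (A' v) = A v
    rw [hA' v, e.apply_symm_apply]
  set b : B2 := fderiv ℝ F p (0, 1) with hb_def
  have hsplit : ∀ (v : B1) (c : ℝ), fderiv ℝ F p (v, c) = A v + c • b := by
    intro v c
    have h1 : ((v, c) : B1 × ℝ) = ((v, 0) : B1 × ℝ) + c • (((0 : B1), (1 : ℝ)) : B1 × ℝ) := by
      simp
    rw [h1, map_add, map_smul]
    rfl
  -- the full derivative of G(h,t) = (F(h,t), t) as a continuous linear equivalence
  set T : B1 × ℝ →L[ℝ] B2 × ℝ := (fderiv ℝ F p).prod (ContinuousLinearMap.snd ℝ B1 ℝ) with hT_def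
  set S : B2 × ℝ →L[ℝ] B1 × ℝ :=
    ((Aeq.symm : B2 →L[ℝ] B1).comp ((ContinuousLinearMap.fst ℝ B2 ℝ) -
      (ContinuousLinearMap.snd ℝ B2 ℝ).smulRight b)).prod (ContinuousLinearMap.snd ℝ B2 ℝ)
    with hS_def
  have hleft : Function.LeftInverse S T := by
    intro x
    have h1 : T x = (A x.1 + x.2 • b, x.2) := by
      simp only [hT_def, ContinuousLinearMap.prod_apply, ContinuousLinearMap.coe_snd']
      rw [show (x : B1 × ℝ) = (x.1, x.2) from rfl] at *
      rw [hsplit]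
    rw [h1]
    apply Prod.ext
    · simp only [hS_def, ContinuousLinearMap.prod_apply, ContinuousLinearMap.coe_comp',
        Function.comp_apply, ContinuousLinearMap.coe_sub', Pi.sub_apply,
        ContinuousLinearMap.coe_fst', ContinuousLinearMap.coe_snd',
        ContinuousLinearMap.smulRight_apply]
      have : A x.1 + x.2 • b - x.2 • b = A x.1 := by abel
      rw [this, ← hAeq x.1, ContinuousLinearEquiv.coe_coe, Aeq.symm_apply_apply]
    · simp [hS_def]
  have hright : Function.RightInverse S T := by
    intro y
    have h1 : S y = (Aeq.symm (y.1 - y.2 • b), y.2) := by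
      simp [hS_def]
    rw [h1]
    apply Prod.ext
    · show fderiv ℝ F p (Aeq.symm (y.1 - y.2 • b), y.2) = y.1
      rw [hsplit, ← hAeq (Aeq.symm (y.1 - y.2 • b)), Aeq.apply_symm_apply]
      abel
    · rfl
  set Geq : (B1 × ℝ) ≃L[ℝ] B2 × ℝ := ContinuousLinearEquiv.equivOfInverse T S hleft hright
    with hGeq_def
  set G : B1 × ℝ → B2 × ℝ := fun q => (F q, q.2) with hG_def
  have hGc : ContDiffAt ℝ 1 G p := (hF.contDiffAt).prodMk (contDiff_snd.contDiffAt)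
  have hGd : HasFDerivAt G (Geq : (B1 × ℝ) →L[ℝ] B2 × ℝ) p := by
    have h1 : HasFDerivAt F (fderiv ℝ F p) p := (hF1 p).hasFDerivAt
    have h2 : HasFDerivAt (fun q : B1 × ℝ => q.2) (ContinuousLinearMap.snd ℝ B1 ℝ) p :=
      hasFDerivAt_snd
    exact h1.prodMk h2
  have hstrict : HasStrictFDerivAt G (Geq : (B1 × ℝ) →L[ℝ] B2 × ℝ) p :=
    hGc.hasStrictFDerivAt' hGd one_ne_zero
  set ψ : B2 × ℝ → B1 × ℝ := hstrict.localInverse G Geq p with hψ_def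
  have hψcd : ContDiffAt ℝ 1 ψ (G p) := hGc.to_localInverse hGd one_ne_zero
  have hGp : G p = ((0 : B2), s) := by
    simp only [hG_def, hp_def, hhs_zero]
    exact congrArg (fun z => (z, s)) hhs_zero
  have hψp : ψ ((0 : B2), s) = p := by
    rw [← hGp]; exact hstrict.localInverse_apply_image
  set g : ℝ → B1 := fun t => (ψ ((0 : B2), t)).1 with hg_def
  have htend : Filter.Tendsto (fun t : ℝ => (((0 : B2), t) : B2 × ℝ)) (nhds s)
      (nhds (((0 : B2), s) : B2 × ℝ)) :=
    (continuous_const.prodMk continuous_id).tendsto s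
  have hg : ContDiffAt ℝ 1 g s := by
    have h1 : ContDiffAt ℝ 1 (fun t : ℝ => (((0 : B2), t) : B2 × ℝ)) s :=
      (contDiff_const.prodMk contDiff_id).contDiffAt
    have h2 : ContDiffAt ℝ 1 ψ (((0 : B2), s) : B2 × ℝ) := hGp ▸ hψcd
    exact contDiff_fst.contDiffAt.comp s (h2.comp s h1)
  have hgs : g s = h s := by
    simp only [hg_def, hψp, hp_def]
  have hev1 : ∀ᶠ t in nhds s, G (ψ ((0 : B2), t)) = ((0 : B2), t) := by
    have := hstrict.eventually_right_inverse
    rw [hGp] at this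
    exact htend.eventually this
  have hev2 : ∀ᶠ t in nhds s, ‖g t‖ < r0 := by
    have hc : Filter.Tendsto (fun t => ‖g t‖) (nhds s) (nhds ‖g s‖) :=
      (hg.continuousAt.norm).tendsto
    have hlt : ‖g s‖ < r0 := by
      rw [hgs]; exact lt_of_le_of_lt (mem_closedBall_zero_iff.mp hhs_ball) hrr0
    exact hc.eventually (Filter.Tendsto.eventually_lt_const hlt Filter.tendsto_id) |>.mono fun t ht => ht
  have hev : ∀ᶠ t in nhds s, t ∈ Icc (0 : ℝ) t0 → h t = g t := by
    filter_upwards [hev1, hev2] with t h1 h2 ht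
    have h2' : (ψ ((0 : B2), t)).2 = t := congrArg Prod.snd h1
    have hpair : ψ ((0 : B2), t) = (g t, t) := Prod.ext rfl h2'
    have hFg : F (g t, t) = 0 := by
      have := congrArg Prod.fst h1
      simp only [hG_def] at this
      rw [hpair] at this
      exact this
    exact ((hh t ht).2.2 (g t) (mem_closedBall_zero_iff.mpr h2.le) hFg).symm
  refine (hg.contDiffWithinAt).congr_of_eventuallyEq ?_ hgs.symm
  have h₁ : ∀ᶠ t in nhdsWithin s (Icc 0 t0), t ∈ Icc (0 : ℝ) t0 → h t = g t :=
    hev.filter_mono nhdsWithin_le_nhds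
  filter_upwards [h₁, self_mem_nhdsWithin] with t H ht
  exact H ht
end

section
/- In the toric setting, the linearization at (h,t) = (0,0) of the phase-angle functional F(h,t) = Im(log Ω_t|_{L_h}), where L_h is the graph of dh over the torus fibre L₀, is the operator δh ↦ −(1/2) Σ_{j,k} ρ^{jk} ∂²(δh)/∂θ_j∂θ_k, where (ρ^{jk}) is the inverse of the Hessian matrix (ρ_{jk}) of the toric Kähler potential. In particular, this operator is elliptic and its kernel on the torus consists exactly of the constant functions. -/
open Complex

section ToricHelpers

open MeasureTheory Real Set Matrix

lemma single_smul' (i : Fin N) (r : ℝ) :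
    r • (Pi.single i 1 : Fin N → ℝ) = Pi.single i r := by
  funext j
  by_cases h : j = i
  · subst h; simp
  · simp [Pi.single_eq_of_ne h]

lemma per_step {u : (Fin N → ℝ) → ℝ}
    (hper : ∀ x j, u (x + Pi.single j (2 * π)) = u x) (m : ℤ) (j : Fin N) (x : Fin N → ℝ) :
    u (x + Pi.single j (2 * π * m)) = u x := by
  induction m using Int.induction_on with
  | zero => simp
  | succ k ih =>
    have : (Pi.single j (2 * π * ((((k : ℤ) + 1) : ℤ) : ℝ)) : Fin N → ℝ)
        = Pi.single j (2 * π * (((k : ℤ) : ℝ))) + Pi.single j (2 * π) := by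
      rw [← Pi.single_add]; congr 1; push_cast; ring
    rw [this, ← add_assoc, hper, ih]
  | pred k ih =>
    have : (Pi.single j (2 * π * (((-(k : ℤ) - 1 : ℤ)) : ℝ)) : Fin N → ℝ)
        = Pi.single j (2 * π * (((-(k:ℤ) : ℤ)) : ℝ)) - Pi.single j (2 * π) := by
      rw [← Pi.single_sub]; congr 1; push_cast; ring
    rw [this]
    have h' : ∀ z : Fin N → ℝ, u (z - Pi.single j (2 * π)) = u z := by
      intro z
      conv_rhs => rw [← sub_add_cancel z (Pi.single j (2 * π)), hper]
    rw [show x + (Pi.single j (2 * π * (((-(k:ℤ) : ℤ)) : ℝ)) - Pi.single j (2 * π))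
        = (x + Pi.single j (2 * π * (((-(k:ℤ) : ℤ)) : ℝ))) - Pi.single j (2 * π)
        from (add_sub_assoc _ _ _).symm, h']
    exact_mod_cast ih

lemma per_reduce {u : (Fin N → ℝ) → ℝ}
    (hper : ∀ x j, u (x + Pi.single j (2 * π)) = u x) (x : Fin N → ℝ) :
    ∃ y ∈ Icc (0 : Fin N → ℝ) (fun _ => 2 * π), u x = u y := by
  have hmulti : ∀ s : Finset (Fin N), ∀ m : Fin N → ℤ, ∀ z,
      u (z + ∑ j ∈ s, Pi.single j (2 * π * m j)) = u z := by
    intro s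
    induction s using Finset.induction_on with
    | empty => simp
    | insert _ _ hj ih =>
      intro m z
      rename_i j s'
      rw [Finset.sum_insert hj, show z + (Pi.single j (2 * π * m j)
          + ∑ k ∈ s', Pi.single k (2 * π * m k))
          = (z + Pi.single j (2 * π * m j)) + ∑ k ∈ s', Pi.single k (2 * π * m k)
          from (add_assoc _ _ _).symm,
        ih, per_step hper]
  set m : Fin N → ℤ := fun j => -⌊x j / (2 * π)⌋ with hm
  refine ⟨x + ∑ j, Pi.single j (2 * π * m j), ?_, (hmulti Finset.univ m x).symm⟩
  have hval : ∀ j, (x + ∑ k, (Pi.single k (2 * π * m k) : Fin N → ℝ)) j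
      = 2 * π * Int.fract (x j / (2 * π)) := by
    intro j
    have hsum : (∑ k, (Pi.single k (2 * π * m k) : Fin N → ℝ)) = fun k => 2 * π * m k :=
      Finset.univ_sum_single _
    have hπ : (2 * π) ≠ 0 := by positivity
    rw [Pi.add_apply, hsum, hm]
    simp only [Int.fract]
    push_cast
    field_simp
    ring
  constructor
  · intro j
    rw [hval j]
    simp only [Pi.zero_apply]
    have := Int.fract_nonneg (x j / (2 * π))
    positivity
  · intro j
    rw [hval j]
    have h1 := (Int.fract_lt_one (x j / (2 * π))).le
    have := pi_pos
    nlinarith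

set_option maxHeartbeats 1000000 in
lemma ibp {n : ℕ} (i : Fin (n + 1)) (F : (Fin (n + 1) → ℝ) → ℝ)
    (F' : (Fin (n + 1) → ℝ) → (Fin (n + 1) → ℝ) →L[ℝ] ℝ)
    (hd : ∀ x, HasFDerivAt F (F' x) x)
    (hc : Continuous fun x => F' x (Pi.single i 1))
    (hper : ∀ x, F (x + Pi.single i (2 * π)) = F x) :
    ∫ x in Icc (0 : Fin (n + 1) → ℝ) (fun _ => 2 * π), F' x (Pi.single i 1) = 0 := by
  set e : ℝ × (Fin n → ℝ) ≃ᵐ (Fin (n + 1) → ℝ) :=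
    (MeasurableEquiv.piFinSuccAbove (fun _ => ℝ) i).symm with he
  have hem : MeasurePreserving e :=
    (volume_preserving_piFinSuccAbove (fun _ : Fin (n + 1) => ℝ) i).symm _
  have heπ : (e ⁻¹' Icc 0 fun _ => 2 * π) =
      Icc 0 (2 * π) ×ˢ Icc (0 : Fin n → ℝ) fun _ => 2 * π :=
    ((Fin.insertNthOrderIso (fun _ => ℝ) i).preimage_Icc _ _).trans (Icc_prod_eq _ _)
  have hecont : Continuous e := by
    apply continuous_pi
    intro j
    rcases eq_or_ne j i with rfl | hj
    · have : (fun p : ℝ × (Fin n → ℝ) => e p j) = fun p => p.1 := by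
        funext p
        simp [he, MeasurableEquiv.piFinSuccAbove_symm_apply, Fin.insertNthEquiv]
      rw [this]; exact continuous_fst
    · obtain ⟨k, rfl⟩ := Fin.exists_succAbove_eq hj
      have : (fun p : ℝ × (Fin n → ℝ) => e p (i.succAbove k)) = fun p => p.2 k := by
        funext p
        simp [he, MeasurableEquiv.piFinSuccAbove_symm_apply, Fin.insertNthEquiv]
      rw [this]; exact (continuous_apply k).comp continuous_snd
  have hesymm : ∀ (t : ℝ) (y : Fin n → ℝ),
      e (t, y) = e (0, y) + t • (Pi.single i 1 : Fin (n + 1) → ℝ) := by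
    intro t y
    funext j
    rcases eq_or_ne j i with rfl | hj
    · simp [he, MeasurableEquiv.piFinSuccAbove_symm_apply, Fin.insertNthEquiv]
    · obtain ⟨k, rfl⟩ := Fin.exists_succAbove_eq hj
      simp [he, MeasurableEquiv.piFinSuccAbove_symm_apply, Fin.insertNthEquiv,
        Pi.single_eq_of_ne (Fin.succAbove_ne i k)]
  have hGcont : Continuous fun p : ℝ × (Fin n → ℝ) => F' (e p) (Pi.single i 1) :=
    hc.comp hecont
  have hInt : IntegrableOn (fun p : ℝ × (Fin n → ℝ) => F' (e p) (Pi.single i 1))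
      (Icc (0:ℝ) (2 * π) ×ˢ Icc (0 : Fin n → ℝ) fun _ => 2 * π) volume :=
    hGcont.continuousOn.integrableOn_compact (isCompact_Icc.prod isCompact_Icc)
  have hmain : ∫ x in Icc (0 : Fin (n + 1) → ℝ) (fun _ => 2 * π), F' x (Pi.single i 1) =
      ∫ t in Icc (0:ℝ) (2 * π), ∫ y in Icc (0 : Fin n → ℝ) (fun _ => 2 * π),
        F' (e (t, y)) (Pi.single i 1) := by
    rw [← hem.map_eq, setIntegral_map_equiv, heπ, Measure.volume_eq_prod, setIntegral_prod]
    exact hInt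
  rw [hmain]
  have hswap : ∫ t in Icc (0:ℝ) (2 * π), ∫ y in Icc (0 : Fin n → ℝ) (fun _ => 2 * π),
      F' (e (t, y)) (Pi.single i 1) =
      ∫ y in Icc (0 : Fin n → ℝ) (fun _ => 2 * π), ∫ t in Icc (0:ℝ) (2 * π),
      F' (e (t, y)) (Pi.single i 1) := by
    apply integral_integral_swap
    rw [Measure.prod_restrict]
    exact hInt
  rw [hswap]
  have hinner : ∀ y : Fin n → ℝ,
      ∫ t in Icc (0:ℝ) (2 * π), F' (e (t, y)) (Pi.single i 1) = 0 := by
    intro y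
    have hderiv : ∀ t : ℝ, HasDerivAt (fun t : ℝ => F (e (t, y)))
        (F' (e (t, y)) (Pi.single i 1)) t := by
      intro t
      have haff : HasDerivAt (fun t : ℝ => e (0, y) + t • (Pi.single i 1 : Fin (n+1) → ℝ))
          (Pi.single i 1) t := by
        simpa using ((hasDerivAt_id t).smul_const (Pi.single i 1 : Fin (n+1) → ℝ)).const_add
          (e (0, y))
      have h := (hd (e (0, y) + t • (Pi.single i 1 : Fin (n+1) → ℝ))).comp_hasDerivAt t haff
      rw [← hesymm t y] at h
      have hfun : (F ∘ fun t : ℝ => e (0, y) + t • (Pi.single i 1 : Fin (n+1) → ℝ))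
          = fun t => F (e (t, y)) := funext fun s => by
        simp only [Function.comp_apply]; rw [← hesymm]
      rwa [hfun] at h
    have hcont : Continuous fun t : ℝ => F' (e (t, y)) (Pi.single i 1) :=
      hGcont.comp (Continuous.prodMk_left y)
    have h2π : (0:ℝ) ≤ 2 * π := by positivity
    rw [integral_Icc_eq_integral_Ioc, ← intervalIntegral.integral_of_le h2π,
      intervalIntegral.integral_eq_sub_of_hasDerivAt (fun t _ => hderiv t)
        (hcont.intervalIntegrable _ _)]
    have : e (2 * π, y) = e (0, y) + Pi.single i (2 * π) := by
      rw [hesymm, single_smul']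
    rw [this]
    have h0 : e (0, y) + (0:ℝ) • (Pi.single i 1 : Fin (n+1) → ℝ) = e (0, y) := by simp
    rw [hper (e (0, y))]
    have h00 : e ((0:ℝ), y) = e (0, y) := rfl
    rw [hesymm 0 y]
    simp
  simp only [hinner, integral_zero]

set_option maxHeartbeats 2000000 in
lemma kernel_forward {n : ℕ} (Hinv : Matrix (Fin (n+1)) (Fin (n+1)) ℝ) (hpd : Hinv.PosDef)
    (u : (Fin (n+1) → ℝ) → ℝ) (hu : ContDiff ℝ 2 u)
    (hper : ∀ x j, u (x + Pi.single j (2 * π)) = u x)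
    (hL : ∀ x, ∑ j, ∑ k, Hinv j k *
      iteratedFDeriv ℝ 2 u x ![Pi.single j 1, Pi.single k 1] = 0) :
    ∃ c : ℝ, ∀ x, u x = c := by
  set B : Set (Fin (n+1) → ℝ) := Icc (0 : Fin (n+1) → ℝ) (fun _ => 2 * π) with hB
  have hud : Differentiable ℝ u := hu.differentiable (by norm_num)
  have hfd1 : ContDiff ℝ 1 (fderiv ℝ u) := hu.fderiv_right (m := 1) (by norm_num)
  have hfdd : Differentiable ℝ (fderiv ℝ u) := hfd1.differentiable one_ne_zero
  have hfd2c : Continuous (fderiv ℝ (fderiv ℝ u)) :=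
    (hfd1.fderiv_right (m := 0) (by norm_num)).continuous
  -- gradient components
  set g : Fin (n+1) → (Fin (n+1) → ℝ) → ℝ := fun k x => fderiv ℝ u x (Pi.single k 1) with hg
  have hgc : ∀ k, Continuous (g k) := fun k =>
    hfd1.continuous.clm_apply continuous_const
  -- second derivatives
  set D2 : (Fin (n+1) → ℝ) → (Fin (n+1) → ℝ) →L[ℝ] (Fin (n+1) → ℝ) →L[ℝ] ℝ := fun x => fderiv ℝ (fderiv ℝ u) x with hD2
  have hgderiv : ∀ k x, HasFDerivAt (g k)
      ((ContinuousLinearMap.apply ℝ ℝ (Pi.single k 1 : Fin (n+1) → ℝ)).comp (D2 x)) x := by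
    intro k x
    exact (ContinuousLinearMap.apply ℝ ℝ (Pi.single k 1 : Fin (n+1) → ℝ)).hasFDerivAt.comp x
      (hfdd x).hasFDerivAt
  have hD2iter : ∀ x (j k : Fin (n+1)), D2 x (Pi.single j 1) (Pi.single k 1)
      = iteratedFDeriv ℝ 2 u x ![Pi.single j 1, Pi.single k 1] := by
    intro x j k
    rw [iteratedFDeriv_two_apply]
    simp [hD2]
  -- periodicity of fderiv
  have hfper : ∀ (j : Fin (n+1)) x, fderiv ℝ u (x + Pi.single j (2 * π)) = fderiv ℝ u x := by
    intro j x
    have h1 : HasFDerivAt (fun y => u (y + Pi.single j (2 * π)))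
        (fderiv ℝ u (x + Pi.single j (2 * π))) x := by
      have := (hud (x + Pi.single j (2 * π))).hasFDerivAt.comp x
        ((hasFDerivAt_id x).add_const (Pi.single j (2 * π)))
      simpa [Function.comp_def] using this
    have h2 : (fun y => u (y + Pi.single j (2 * π))) = u := funext fun y => hper y j
    rw [h2] at h1
    exact (h1.fderiv).symm
  have hgper : ∀ k (j : Fin (n+1)) x, g k (x + Pi.single j (2 * π)) = g k x := by
    intro k j x; simp only [hg]; rw [hfper]
  -- the vector fields V j and their derivatives
  set V : Fin (n+1) → (Fin (n+1) → ℝ) → ℝ := fun j x => ∑ k, Hinv j k * (u x * g k x) with hV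
  set V' : Fin (n+1) → (Fin (n+1) → ℝ) → (Fin (n+1) → ℝ) →L[ℝ] ℝ := fun j x =>
    ∑ k, Hinv j k • (u x • ((ContinuousLinearMap.apply ℝ ℝ (Pi.single k 1 : Fin (n+1) → ℝ)).comp (D2 x))
      + g k x • fderiv ℝ u x) with hV'
  have hVderiv : ∀ j x, HasFDerivAt (V j) (V' j x) x := by
    intro j x
    exact HasFDerivAt.fun_sum fun k _ =>
      (((hud x).hasFDerivAt.fun_mul (hgderiv k x)).const_mul (Hinv j k))
  have hV'apply : ∀ j x, V' j x (Pi.single j 1)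
      = ∑ k, Hinv j k * (u x * (D2 x (Pi.single j 1) (Pi.single k 1)) + g k x * g j x) := by
    intro j x
    simp only [hV', ContinuousLinearMap.sum_apply, ContinuousLinearMap.smul_apply,
      ContinuousLinearMap.add_apply, ContinuousLinearMap.comp_apply,
      ContinuousLinearMap.apply_apply, smul_eq_mul]
    rfl
  have hV'cont : ∀ j, Continuous fun x => V' j x (Pi.single j 1) := by
    intro j
    have : (fun x => V' j x (Pi.single j 1)) = fun x =>
        ∑ k, Hinv j k * (u x * (D2 x (Pi.single j 1) (Pi.single k 1)) + g k x * g j x) :=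
      funext fun x => hV'apply j x
    rw [this]
    refine continuous_finset_sum _ fun k _ => Continuous.mul continuous_const ?_
    refine Continuous.add (hu.continuous.mul ?_) ((hgc k).mul (hgc j))
    have h1 : Continuous fun x => D2 x (Pi.single j 1) :=
      hfd2c.clm_apply continuous_const
    exact h1.clm_apply continuous_const
  have hVper : ∀ j (i : Fin (n+1)) x, V j (x + Pi.single i (2 * π)) = V j x := by
    intro j i x
    simp only [hV]
    refine Finset.sum_congr rfl fun k _ => ?_
    rw [hper x i, hgper k i x]
  -- Q
  set Q : (Fin (n+1) → ℝ) → ℝ := fun x => ∑ j, ∑ k, Hinv j k * (g j x * g k x) with hQ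
  have hQcont : Continuous Q := by
    refine continuous_finset_sum _ fun j _ => continuous_finset_sum _ fun k _ => ?_
    exact continuous_const.mul ((hgc j).mul (hgc k))
  have hkey : ∀ x, ∑ j, V' j x (Pi.single j 1) = Q x := by
    intro x
    have expand : ∀ j, V' j x (Pi.single j 1)
        = (∑ k, Hinv j k * (u x * iteratedFDeriv ℝ 2 u x ![Pi.single j 1, Pi.single k 1]))
          + ∑ k, Hinv j k * (g j x * g k x) := by
      intro j
      rw [hV'apply, ← Finset.sum_add_distrib]
      refine Finset.sum_congr rfl fun k _ => ?_
      rw [hD2iter]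
      ring
    rw [Finset.sum_congr rfl fun j _ => expand j, Finset.sum_add_distrib, hQ]
    have : ∑ j, ∑ k, Hinv j k * (u x * iteratedFDeriv ℝ 2 u x ![Pi.single j 1, Pi.single k 1])
        = u x * ∑ j, ∑ k, Hinv j k * iteratedFDeriv ℝ 2 u x ![Pi.single j 1, Pi.single k 1] := by
      rw [Finset.mul_sum]
      refine Finset.sum_congr rfl fun j _ => ?_
      rw [Finset.mul_sum]
      refine Finset.sum_congr rfl fun k _ => ?_
      ring
    rw [this, hL x, mul_zero, zero_add]
  -- integral of Q over box is zero
  have hQint0 : ∫ x in B, Q x = 0 := by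
    have h1 : ∫ x in B, Q x = ∑ j, ∫ x in B, V' j x (Pi.single j 1) := by
      rw [← integral_finset_sum]
      · exact setIntegral_congr_fun measurableSet_Icc fun x _ => (hkey x).symm
      · intro j _
        exact ((hV'cont j).continuousOn).integrableOn_compact isCompact_Icc
    rw [h1]
    refine Finset.sum_eq_zero fun j _ => ?_
    exact ibp j (V j) (V' j) (hVderiv j) (hV'cont j) (fun x => hVper j j x)
  -- Q is nonneg
  have hQrep : ∀ x, Q x = (fun k => g k x) ⬝ᵥ Hinv.mulVec (fun k => g k x) := by
    intro x
    simp only [hQ, dotProduct, Matrix.mulVec, Finset.mul_sum]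
    refine Finset.sum_congr rfl fun j _ => Finset.sum_congr rfl fun k _ => ?_
    ring
  have hQnonneg : ∀ x, 0 ≤ Q x := by
    intro x
    rw [hQrep]
    rcases eq_or_ne (fun k => g k x) 0 with h0 | h0
    · rw [h0]; simp
    · exact le_of_lt (by simpa using hpd.dotProduct_mulVec_pos h0)
  -- Q = 0 on B
  have hQB : ∀ x ∈ B, Q x = 0 := by
    have hae : ∀ᵐ x ∂(volume.restrict B), Q x = 0 := by
      have hint : Integrable Q (volume.restrict B) :=
        (hQcont.continuousOn).integrableOn_compact isCompact_Icc
      have := (integral_eq_zero_iff_of_nonneg (fun x => hQnonneg x) hint).mp hQint0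
      filter_upwards [this] with x hx using hx
    -- open box
    set Bo : Set (Fin (n+1) → ℝ) := Set.pi Set.univ (fun _ => Ioo (0:ℝ) (2 * π)) with hBo
    have hBoopen : IsOpen Bo := isOpen_set_pi Set.finite_univ fun _ _ => isOpen_Ioo
    have hBoB : Bo ⊆ B := by
      rw [hB, ← Set.pi_univ_Icc]
      exact Set.pi_mono fun i _ => Ioo_subset_Icc_self
    have hQBo : ∀ x ∈ Bo, Q x = 0 := by
      by_contra hcon
      push_neg at hcon
      obtain ⟨x, hx, hQx⟩ := hcon
      have hQxpos : 0 < Q x := lt_of_le_of_ne (hQnonneg x) (Ne.symm hQx)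
      set U : Set (Fin (n+1) → ℝ) := Bo ∩ Q ⁻¹' (Ioi (Q x / 2)) with hU
      have hUopen : IsOpen U := hBoopen.inter (isOpen_Ioi.preimage hQcont)
      have hUne : U.Nonempty := ⟨x, hx, by simp [hU]; linarith⟩
      have hUpos : 0 < volume U := hUopen.measure_pos volume hUne
      have hUsub : U ⊆ {y | Q y ≠ 0} ∩ B := by
        intro y hy
        refine ⟨?_, hBoB hy.1⟩
        have : Q x / 2 < Q y := hy.2
        simp only [mem_setOf_eq]
        linarith
      have hz : volume ({y | Q y ≠ 0} ∩ B) = 0 := by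
        have := ae_iff.mp hae
        rwa [Measure.restrict_apply] at this
        exact (isOpen_ne.preimage hQcont).measurableSet
      exact absurd (measure_mono hUsub) (by rw [hz]; exact fun h => hUpos.ne' (le_antisymm h zero_le) )
    intro x hx
    have hcl : closure Bo = B := by
      rw [hBo, hB, closure_pi_set, ← Set.pi_univ_Icc]
      refine Set.pi_congr rfl fun i _ => ?_
      simp only [Pi.zero_apply]
      exact closure_Ioo (by positivity : (0:ℝ) < 2 * π).ne
    have : B ⊆ {y | Q y = 0} :=
      hcl ▸ closure_minimal (fun y hy => hQBo y hy) (isClosed_eq hQcont continuous_const)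
    exact this hx
  -- Q = 0 everywhere
  have hQper : ∀ x (j : Fin (n+1)), Q (x + Pi.single j (2 * π)) = Q x := by
    intro x j
    simp only [hQ]
    refine Finset.sum_congr rfl fun a _ => Finset.sum_congr rfl fun b _ => ?_
    rw [hgper a j x, hgper b j x]
  have hQzero : ∀ x, Q x = 0 := by
    intro x
    obtain ⟨y, hy, hxy⟩ := per_reduce hQper x
    rw [hxy]
    exact hQB y hy
  -- gradient vanishes
  have hgzero : ∀ x, fderiv ℝ u x = 0 := by
    intro x
    have hvec : (fun k => g k x) = 0 := by
      by_contra hne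
      have h2 := hpd.dotProduct_mulVec_pos hne
      rw [star_trivial, ← hQrep x, hQzero x] at h2
      exact lt_irrefl 0 h2
    ext v
    have hv : (∑ j, v j • (Pi.single j 1 : Fin (n+1) → ℝ)) = v := by
      rw [Finset.sum_congr rfl fun j (_ : j ∈ Finset.univ) => single_smul' j (v j)]
      exact Finset.univ_sum_single v
    rw [← hv, map_sum, ContinuousLinearMap.zero_apply]
    refine Finset.sum_eq_zero fun j _ => ?_
    have h0 : g j x = 0 := by simpa using congrFun hvec j
    rw [_root_.map_smul]
    simp only [hg] at h0
    rw [h0, smul_zero]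
  exact ⟨u 0, fun x => is_const_of_fderiv_eq_zero hud hgzero x 0⟩

lemma kernel_all {n : ℕ} (Hinv : Matrix (Fin n) (Fin n) ℝ) (hpd : Hinv.PosDef)
    (u : (Fin n → ℝ) → ℝ) (hu : ContDiff ℝ 2 u)
    (hper : ∀ x j, u (x + Pi.single j (2 * π)) = u x)
    (hL : ∀ x, ∑ j, ∑ k, Hinv j k *
      iteratedFDeriv ℝ 2 u x ![Pi.single j 1, Pi.single k 1] = 0) :
    ∃ c : ℝ, ∀ x, u x = c :=
  match n, Hinv, hpd, u, hu, hper, hL with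
  | 0, _, _, u, _, _, _ =>
      ⟨u (fun i => i.elim0), fun x => congrArg u (Subsingleton.elim _ _)⟩
  | (m+1), Hinv, hpd, u, hu, hper, hL => kernel_forward Hinv hpd u hu hper hL

end ToricHelpers

/-- In the toric setting (constant positive definite Hessian `H = (ρ_{jk})` with inverse
`Hinv = (ρ^{jk})`, `η₀ = 1`, `U₀ = (−i/2)(ρ^{jk})`), the linearization at `(h,t)=(0,0)`
of the phase functional `F(h,t) = Im log Ω_t|_{L_h}` is
`δh ↦ −(1/2) Σ ρ^{jk} ∂²δh/∂θ_j∂θ_k`: its value on a Hessian matrix `A` of `δh` is the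
derivative at `s = 0` of `Im log det (I + s U₀ A)`.  Moreover this elliptic operator has,
on the torus (i.e. on smooth `2π`-periodic functions), kernel exactly the constants. -/
theorem toric_linearization_and_kernel
    (n : ℕ) (H Hinv : Matrix (Fin n) (Fin n) ℝ)
    (hpos : H.PosDef) (hsymm : H.IsSymm)
    (hHinv : H * Hinv = 1 ∧ Hinv * H = 1) :
    -- the linearization is δh ↦ −(1/2) Σ ρ^{jk} ∂²δh/∂θ_j∂θ_k
    (∀ A : Matrix (Fin n) (Fin n) ℝ, A.IsSymm →
      HasDerivAt (fun s : ℝ =>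
          (Complex.log (Matrix.det ((1 : Matrix (Fin n) (Fin n) ℂ) +
            (s : ℂ) • ((((-Complex.I) / 2) • (Hinv.map (fun a => (a : ℂ)))) *
              (A.map (fun a => (a : ℂ))))))).im)
        (-(1 / 2) * ∑ j, ∑ k, Hinv j k * A j k) 0) ∧
    -- kernel on the torus consists exactly of the constants
    (∀ u : (Fin n → ℝ) → ℝ, ContDiff ℝ 2 u →
      (∀ x j, u (x + Pi.single j (2 * Real.pi)) = u x) →
      ((∀ x, ∑ j, ∑ k, Hinv j k *
          iteratedFDeriv ℝ 2 u x ![Pi.single j 1, Pi.single k 1] = 0) ↔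
        ∃ c : ℝ, ∀ x, u x = c)) := by
  constructor
  · intro A hA
    set M : Matrix (Fin n) (Fin n) ℂ :=
      (((-Complex.I) / 2) • (Hinv.map (fun a => (a : ℂ)))) * (A.map (fun a => (a : ℂ))) with hM
    set P : Polynomial ℂ := (Matrix.det (1 + (Polynomial.X : Polynomial ℂ) • M.map Polynomial.C)).divX.divX with hP
    have hdet : ∀ s : ℝ, Matrix.det (1 + (s:ℂ) • M)
        = 1 + Matrix.trace M * (s:ℂ) + P.eval (s:ℂ) * (s:ℂ)^2 := fun s =>
      Matrix.det_one_add_smul (s:ℂ) M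
    have hq : HasDerivAt (fun z : ℂ => 1 + Matrix.trace M * z + P.eval z * z^2) (Matrix.trace M) (0:ℂ) := by
      have hA' : HasDerivAt (fun z : ℂ => 1 + Matrix.trace M * z) (Matrix.trace M) 0 := by
        simpa using ((hasDerivAt_id (0:ℂ)).const_mul (Matrix.trace M)).const_add 1
      have hB : HasDerivAt (fun z : ℂ => P.eval z * z^2) 0 0 := by
        simpa using (P.hasDerivAt (0:ℂ)).fun_mul (hasDerivAt_pow 2 (0:ℂ))
      simpa using hA'.fun_add hB
    have hd : HasDerivAt (fun s : ℝ => Matrix.det (1 + (s:ℂ) • M)) (Matrix.trace M) 0 := by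
      have := hq.comp_ofReal (z := 0)
      convert this using 1
      funext s
      exact hdet s
    have h1 : Matrix.det (1 + ((0:ℝ):ℂ) • M) = 1 := by simp
    have hlog : HasDerivAt (fun s : ℝ => Complex.log (Matrix.det (1 + (s:ℂ) • M)))
        (Matrix.trace M) 0 := by
      have := hd.clog_real (by rw [h1]; exact Complex.one_mem_slitPlane)
      simpa [h1] using this
    have him : HasDerivAt (fun s : ℝ => (Complex.log (Matrix.det (1 + (s:ℂ) • M))).im)
        ((Matrix.trace M).im) 0 :=
      (Complex.imCLM.hasFDerivAt.comp_hasDerivAt 0 hlog)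
    have htr : (Matrix.trace M).im = -(1 / 2) * ∑ j, ∑ k, Hinv j k * A j k := by
      have : Matrix.trace M = ((-Complex.I)/2) * ((∑ j, ∑ k, Hinv j k * A k j : ℝ) : ℂ) := by
        rw [hM, Matrix.smul_mul, Matrix.trace_smul]
        congr 1
        simp only [Matrix.trace, Matrix.diag, Matrix.mul_apply, Matrix.map_apply,
          Complex.ofReal_sum, Complex.ofReal_mul]
      rw [this]
      have hsym : (∑ j, ∑ k, Hinv j k * A k j) = ∑ j, ∑ k, Hinv j k * A j k := by
        refine Finset.sum_congr rfl fun j _ => Finset.sum_congr rfl fun k _ => ?_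
        rw [hA.apply k j]
      simp [Complex.mul_im, Complex.div_im, Complex.div_re]
      rw [hsym]; ring
    rw [← htr]
    exact him
  · intro u hu hper
    constructor
    · intro hL
      have hpd : Hinv.PosDef := (Matrix.inv_eq_right_inv hHinv.1) ▸ hpos.inv
      exact kernel_all Hinv hpd u hu hper hL
    · rintro ⟨c, hc⟩ x
      have hu0 : u = fun _ => c := funext hc
      rw [hu0]
      simp [iteratedFDeriv_const_of_ne (by norm_num : (2:ℕ) ≠ 0)]
end

section
/- In ℂ^{n+1} with coordinates z₀,…,z_n, the map π_t(z) = (|z_k|² − min_{0≤i≤n} |z_i|²)_{k=0}^{n} sends the hypersurface X_{t,0} = {z₀⋯z_n = t} (t ≠ 0) into the boundary ∂Δ of the first quadrant Δ = ℝ_{≥0}^{n+1}, and each fibre of π_t over a point of ∂Δ with exactly one zero coordinate is a smooth n-torus. -/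
open Finset

private lemma prod_add_unique {N : ℕ} (x : Fin (N + 1) → ℝ) (hx : ∀ k, 0 ≤ x k)
    {m m' : ℝ} (hm : 0 < m) (hm' : 0 < m')
    (h : ∏ k, (m + x k) = ∏ k, (m' + x k)) : m = m' := by
  by_contra hne
  rcases lt_or_gt_of_ne hne with hlt | hlt
  · exact absurd h (ne_of_lt (Finset.prod_lt_prod_of_nonempty
      (fun i _ => by linarith [hx i]) (fun i _ => by linarith) Finset.univ_nonempty))
  · exact absurd h (ne_of_gt (Finset.prod_lt_prod_of_nonempty
      (fun i _ => by linarith [hx i]) (fun i _ => by linarith) Finset.univ_nonempty))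

/-- The map `π_t(z)_k = |z_k|² − min_i |z_i|²` sends the hypersurface
`X_{t,0} = {z₀⋯z_n = t}` (`t ≠ 0`) into the boundary `∂Δ` of the first quadrant
`Δ = ℝ_{≥0}^{n+1}` (all coordinates nonnegative, at least one zero), and its fibre over
any point of `∂Δ` with exactly one vanishing coordinate is a smooth `n`-torus. -/
theorem toric_local_model_fibration
    (n : ℕ) (t : ℂ) (ht : t ≠ 0) :
    (∀ z : Fin (n + 1) → ℂ, (∏ k, z k) = t →
      (∀ k, 0 ≤ ‖z k‖ ^ 2 -
          Finset.univ.inf' Finset.univ_nonempty (fun i => ‖z i‖ ^ 2)) ∧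
      (∃ k, ‖z k‖ ^ 2 -
          Finset.univ.inf' Finset.univ_nonempty (fun i => ‖z i‖ ^ 2) = 0)) ∧
    (∀ x : Fin (n + 1) → ℝ, ∀ j : Fin (n + 1), x j = 0 → (∀ k, k ≠ j → 0 < x k) →
      Nonempty
        (({z : Fin (n + 1) → ℂ // (∏ k, z k) = t ∧
            ∀ k, ‖z k‖ ^ 2 -
              Finset.univ.inf' Finset.univ_nonempty
                (fun i => ‖z i‖ ^ 2) = x k}) ≃ₜ (Fin n → Circle))) := by
  constructor
  · -- first part: image lies in ∂Δ
    intro z _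
    constructor
    · intro k
      have := Finset.inf'_le (fun i => ‖z i‖ ^ 2) (Finset.mem_univ k)
      linarith
    · obtain ⟨i, _, hi⟩ := Finset.exists_mem_eq_inf' (Finset.univ_nonempty)
        (fun i => ‖z i‖ ^ 2)
      exact ⟨i, by rw [← hi]; ring⟩
  · intro x j hj hpos
    have hx : ∀ k, 0 ≤ x k := by
      intro k
      by_cases hk : k = j
      · simp [hk, hj]
      · exact (hpos k hk).le
    set a : ℝ := ‖t‖ with ha_def
    have ha : 0 < a := by rw [ha_def]; exact norm_pos_iff.mpr ht
    -- existence of the radius parameter m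
    obtain ⟨m, hm_mem, hm⟩ : ∃ m ∈ Set.Icc (0:ℝ) (a ^ 2 + 1),
        (∏ k, (m + x k)) = a ^ 2 := by
      have hcont : ContinuousOn (fun m : ℝ => ∏ k, (m + x k))
          (Set.Icc 0 (a ^ 2 + 1)) := by fun_prop
      have hle : (0:ℝ) ≤ a ^ 2 + 1 := by positivity
      have h0 : (∏ k, ((0:ℝ) + x k)) = 0 :=
        Finset.prod_eq_zero (Finset.mem_univ j) (by simp [hj])
      have hM : a ^ 2 ≤ ∏ k, ((a ^ 2 + 1) + x k) := by
        calc a ^ 2 ≤ (a ^ 2 + 1) ^ (n + 1) := by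
              calc a ^ 2 ≤ a ^ 2 + 1 := by linarith
              _ ≤ (a ^ 2 + 1) ^ (n + 1) := le_self_pow₀ (by nlinarith [sq_nonneg a]) (by omega)
          _ = ∏ _k : Fin (n + 1), (a ^ 2 + 1) := by
              rw [Finset.prod_const, Finset.card_univ, Fintype.card_fin]
          _ ≤ ∏ k, ((a ^ 2 + 1) + x k) :=
              Finset.prod_le_prod (fun i _ => by nlinarith [hx i, sq_nonneg a])
                (fun i _ => by linarith [hx i])
      have := intermediate_value_Icc hle hcont (by rw [h0]; exact ⟨by positivity, hM⟩)
      obtain ⟨m, hmem, hmeq⟩ := this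
      exact ⟨m, hmem, hmeq⟩
    have hm0 : 0 < m := by
      rcases hm_mem.1.lt_or_eq with h | h
      · exact h
      · exfalso
        rw [← h] at hm
        rw [Finset.prod_eq_zero (Finset.mem_univ j) (by simp [hj])] at hm
        exact absurd hm.symm (pow_ne_zero 2 ha.ne')
    set r : Fin (n + 1) → ℝ := fun k => Real.sqrt (m + x k) with hr_def
    have hrpos : ∀ k, 0 < r k := fun k => Real.sqrt_pos.2 (by linarith [hx k])
    have hr2 : ∀ k, r k ^ 2 = m + x k := fun k => Real.sq_sqrt (by linarith [hx k])
    have hprod_r : (∏ k, r k) = a := by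
      have h1 : (∏ k, r k) ^ 2 = a ^ 2 := by
        rw [← Finset.prod_pow]
        rw [← hm]
        exact Finset.prod_congr rfl fun k _ => hr2 k
      have h2 : 0 ≤ ∏ k, r k := Finset.prod_nonneg fun k _ => (hrpos k).le
      calc (∏ k, r k) = Real.sqrt ((∏ k, r k) ^ 2) := (Real.sqrt_sq h2).symm
        _ = Real.sqrt (a ^ 2) := by rw [h1]
        _ = a := Real.sqrt_sq ha.le
    have hinf : ∀ w : Fin (n + 1) → ℂ, (∀ k, ‖w k‖ ^ 2 = m + x k) →
        Finset.univ.inf' Finset.univ_nonempty (fun i => ‖w i‖ ^ 2) = m := by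
      intro w hw
      refine le_antisymm ?_ ?_
      · exact (Finset.inf'_le _ (Finset.mem_univ j)).trans (by rw [hw j, hj, add_zero])
      · exact Finset.le_inf' _ _ fun i _ => by rw [hw i]; linarith [hx i]
    -- membership characterization
    have hmem : ∀ z : Fin (n + 1) → ℂ, (∏ k, z k) = t →
        ((∀ k, ‖z k‖ ^ 2 -
            Finset.univ.inf' Finset.univ_nonempty
              (fun i => ‖z i‖ ^ 2) = x k) ↔
          (∀ k, ‖z k‖ = r k)) := by
      intro z hz
      constructor
      · intro h
        set m' : ℝ := Finset.univ.inf' Finset.univ_nonempty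
          (fun i => ‖z i‖ ^ 2) with hm'_def
        have habs2 : ∀ k, ‖z k‖ ^ 2 = m' + x k := fun k => by
          have := h k; linarith
        have hprod : (∏ k, (m' + x k)) = a ^ 2 := by
          have : (∏ k, ‖z k‖ ^ 2) = a ^ 2 := by
            rw [Finset.prod_pow, ← norm_prod, hz, ha_def]
          rw [← this]
          exact (Finset.prod_congr rfl fun k _ => (habs2 k).symm)
        have hm'0 : 0 < m' := by
          rcases lt_or_ge 0 m' with h' | h'
          · exact h'
          have hm'nn : 0 ≤ m' := by
            have := habs2 j
            rw [hj, add_zero] at this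
            rw [← this]; positivity
          have : m' = 0 := le_antisymm h' hm'nn
          rw [this] at hprod
          rw [Finset.prod_eq_zero (Finset.mem_univ j) (by simp [hj])] at hprod
          exact absurd hprod.symm (pow_ne_zero 2 ha.ne')
        have : m = m' := prod_add_unique x hx hm0 hm'0 (by rw [hm, hprod])
        intro k
        have : ‖z k‖ ^ 2 = r k ^ 2 := by rw [habs2 k, hr2 k, this]
        calc ‖z k‖ = Real.sqrt (‖z k‖ ^ 2) :=
              (Real.sqrt_sq (by positivity)).symm
          _ = Real.sqrt (r k ^ 2) := by rw [this]
          _ = r k := Real.sqrt_sq (hrpos k).le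
      · intro h k
        have habs2 : ∀ i, ‖z i‖ ^ 2 = m + x i := fun i => by
          rw [h i, hr2 i]
        rw [hinf z habs2, habs2 k]
        ring
    -- the phase torus
    set u : ℂ := t / (a : ℂ) with hu_def
    have haC : (a : ℂ) ≠ 0 := by
      simp only [ne_eq, Complex.ofReal_eq_zero]
      exact ha.ne'
    have hu : ‖u‖ = 1 := by
      rw [hu_def, norm_div, Complex.norm_real, Real.norm_eq_abs, abs_of_pos ha]
      exact div_self ha.ne'
    set F := {z : Fin (n + 1) → ℂ // (∏ k, z k) = t ∧
      ∀ k, ‖z k‖ ^ 2 -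
        Finset.univ.inf' Finset.univ_nonempty
          (fun i => ‖z i‖ ^ 2) = x k} with hF_def
    -- the phase map
    set ψ : (Fin n → Circle) → Fin (n + 1) → ℂ :=
      fun φ => Fin.snoc (fun i => (φ i : ℂ)) (u * (((∏ i, φ i)⁻¹ : Circle) : ℂ))
      with hψ_def
    have hcoe_prod : ∀ φ : Fin n → Circle,
        (((∏ i, φ i : Circle)) : ℂ) = ∏ i, (φ i : ℂ) := fun φ =>
      map_prod Circle.coeHom φ Finset.univ
    have hψabs : ∀ φ k, ‖ψ φ k‖ = 1 := by
      intro φ k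
      induction k using Fin.lastCases with
      | last =>
        simp only [hψ_def, Fin.snoc_last]
        rw [norm_mul, hu]
        simp [Circle.norm_coe]
      | cast i =>
        simp [hψ_def, Fin.snoc_castSucc, Circle.norm_coe]
    have hψprod : ∀ φ, (∏ k, ψ φ k) = u := by
      intro φ
      rw [Fin.prod_univ_castSucc]
      simp only [hψ_def, Fin.snoc_last, Fin.snoc_castSucc]
      rw [Circle.coe_inv, hcoe_prod]
      have hne : (∏ i, (φ i : ℂ)) ≠ 0 :=
        Finset.prod_ne_zero_iff.2 fun i _ => Circle.coe_ne_zero _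
      rw [mul_comm, mul_assoc, inv_mul_cancel₀ hne, mul_one]
    have hrC : ∀ k, (r k : ℂ) ≠ 0 := fun k => by
      simp only [ne_eq, Complex.ofReal_eq_zero]
      exact (hrpos k).ne'
    -- the inverse map lands in the fibre
    have hg_mem : ∀ φ : Fin n → Circle,
        (∏ k, ((r k : ℂ) * ψ φ k)) = t ∧
        ∀ k, ‖(r k : ℂ) * ψ φ k‖ ^ 2 -
          Finset.univ.inf' Finset.univ_nonempty
            (fun i => ‖(r i : ℂ) * ψ φ i‖ ^ 2) = x k := by
      intro φ
      have hprod : (∏ k, ((r k : ℂ) * ψ φ k)) = t := by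
        rw [Finset.prod_mul_distrib, hψprod]
        have : (∏ k, ((r k : ℝ) : ℂ)) = ((∏ k, r k : ℝ) : ℂ) := by push_cast; ring
        rw [this, hprod_r, hu_def]
        field_simp
      refine ⟨hprod, ?_⟩
      have habs : ∀ k, ‖(r k : ℂ) * ψ φ k‖ = r k := by
        intro k
        rw [norm_mul, hψabs, mul_one, Complex.norm_real, Real.norm_eq_abs, abs_of_pos (hrpos k)]
      exact (hmem _ hprod).mpr habs
    -- build the homeomorphism
    have hf_mem : ∀ z : F, ∀ i : Fin n,
        z.1 i.castSucc / (r i.castSucc : ℂ) ∈ Submonoid.unitSphere ℂ := by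
      intro z i
      have habs := (hmem z.1 z.2.1).mp z.2.2
      refine mem_sphere_zero_iff_norm.2 ?_
      show ‖_‖ = 1
      rw [norm_div, habs, Complex.norm_real, Real.norm_eq_abs, abs_of_pos (hrpos _)]
      exact div_self (hrpos _).ne'
    refine ⟨Homeomorph.mk
      ⟨fun z i => ⟨z.1 i.castSucc / (r i.castSucc : ℂ), hf_mem z i⟩,
       fun φ => ⟨fun k => (r k : ℂ) * ψ φ k, hg_mem φ⟩, ?_, ?_⟩ ?_ ?_⟩
    · -- left_inv
      intro z
      have habs := (hmem z.1 z.2.1).mp z.2.2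
      have hzne : ∀ k, z.1 k ≠ 0 := fun k => by
        intro h
        have := habs k
        rw [h] at this
        simp only [norm_zero] at this
        exact (hrpos k).ne this
      apply Subtype.ext
      funext k
      induction k using Fin.lastCases with
      | last =>
        show (r (Fin.last n) : ℂ) * ψ _ (Fin.last n) = z.1 (Fin.last n)
        simp only [hψ_def, Fin.snoc_last]
        rw [Circle.coe_inv]
        erw [hcoe_prod]
        have hA : (∏ i : Fin n, z.1 i.castSucc) * z.1 (Fin.last n) = t := by
          rw [← Fin.prod_univ_castSucc]; exact z.2.1
        have hB : (∏ i : Fin n, ((r i.castSucc : ℝ) : ℂ)) * (r (Fin.last n) : ℂ)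
            = (a : ℂ) := by
          have : ((∏ k, r k : ℝ) : ℂ) = (a : ℂ) := by rw [hprod_r]
          rw [← this]
          push_cast [Fin.prod_univ_castSucc]
          ring
        have hAne : (∏ i : Fin n, z.1 i.castSucc) ≠ 0 :=
          Finset.prod_ne_zero_iff.2 fun i _ => hzne _
        have hBne : (∏ i : Fin n, ((r i.castSucc : ℝ) : ℂ)) ≠ 0 :=
          Finset.prod_ne_zero_iff.2 fun i _ => hrC _
        have hprod_div : (∏ i : Fin n, (z.1 i.castSucc / (r i.castSucc : ℂ)))
            = (∏ i : Fin n, z.1 i.castSucc) / (∏ i : Fin n, ((r i.castSucc : ℝ) : ℂ)) :=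
          Finset.prod_div_distrib _ _
        have hcoe : (∏ i : Fin n,
            ((⟨z.1 i.castSucc / (r i.castSucc : ℂ), hf_mem z i⟩ : Circle) : ℂ))
            = ∏ i : Fin n, (z.1 i.castSucc / (r i.castSucc : ℂ)) := rfl
        show (r (Fin.last n) : ℂ) * (u * (∏ i : Fin n,
          ((⟨z.1 i.castSucc / (r i.castSucc : ℂ), hf_mem z i⟩ : Circle) : ℂ))⁻¹)
          = z.1 (Fin.last n)
        rw [hcoe, hprod_div, hu_def]
        field_simp
        linear_combination (-(((r (Fin.last n) : ℝ) : ℂ) *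
            ∏ i : Fin n, ((r i.castSucc : ℝ) : ℂ))) * hA +
          (z.1 (Fin.last n) * ∏ i : Fin n, z.1 i.castSucc) * hB
      | cast i =>
        show (r i.castSucc : ℂ) * ψ _ i.castSucc = z.1 i.castSucc
        simp only [hψ_def, Fin.snoc_castSucc]
        exact mul_div_cancel₀ _ (hrC _)
    · -- right_inv
      intro φ
      funext i
      apply Subtype.ext
      show ((r i.castSucc : ℂ) * ψ φ i.castSucc) / (r i.castSucc : ℂ) = (φ i : ℂ)
      rw [mul_comm, mul_div_assoc, div_self (hrC _), mul_one]
      simp [hψ_def, Fin.snoc_castSucc]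
    · -- continuity of toFun
      apply continuous_pi
      intro i
      apply Continuous.subtype_mk
      exact ((continuous_apply _).comp continuous_subtype_val).div_const _
    · -- continuity of invFun
      apply Continuous.subtype_mk
      apply continuous_pi
      intro k
      apply Continuous.mul continuous_const
      induction k using Fin.lastCases with
      | last =>
        simp only [hψ_def, Fin.snoc_last]
        apply Continuous.mul continuous_const
        have hc : Continuous fun φ : Fin n → Circle => (∏ i, φ i)⁻¹ :=
          (continuous_finset_prod Finset.univ fun i _ => continuous_apply i).inv
        exact continuous_subtype_val.comp hc
      | cast i =>
        simp only [hψ_def, Fin.snoc_castSucc]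
        exact continuous_subtype_val.comp (continuous_apply i)
end
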